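/- Let G = (V,E) be a DAG and let A, B ∈ V be distinct vertices with B ∉ De(A,G) and B ∉ Pa(A,G). Then A and B are d-separated given Pa(A,G) in G. -/
import Mathlib


universe u

/-- A directed acyclic graph on vertex type `V`: an edge relation whose
transitive closure is irreflexive (no directed cycles, no self-loops). -/
structure DAG (V : Type u) where
  E : V → V → Prop
  acyclic : ∀ v, ¬ Relation.TransGen E v v

namespace DAG

variable {V : Type u}

/-- Parents of `w`: vertices `u` with `u → w`. -/
def Pa (G : DAG V) (w : V) : Set V := {u | G.E u w}

/-- Neighbors of `w`: vertices `u` with `u → w` or `w → u`. -/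
def Ne (G : DAG V) (w : V) : Set V := {u | G.E u w ∨ G.E w u}

/-- Descendants of `w`: vertices reachable from `w` by a directed path of length ≥ 1. -/
def De (G : DAG V) (w : V) : Set V := {u | Relation.TransGen G.E w u}

/-- `p` is a path between `A` and `B`: a list of pairwise distinct vertices,
starting at `A`, ending at `B`, consecutive vertices joined by an edge
in one direction or the other. -/
def IsPathBetween (G : DAG V) (A B : V) (p : List V) : Prop :=
  p.Nodup ∧ p.Chain' (fun a b => G.E a b ∨ G.E b a) ∧
  p.head? = some A ∧ p.getLast? = some B

/-- `w` is a collider on the path `p`: it is an interior vertex of `p`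
and both edges of `p` incident to `w` point into `w`. -/
def IsColliderOn (G : DAG V) (p : List V) (w : V) : Prop :=
  ∃ a b, List.IsInfix [a, w, b] p ∧ G.E a w ∧ G.E b w

/-- The path `p` is blocked by `Z`: it contains an interior non-collider in `Z`,
or it contains a collider `w` with `({w} ∪ De(w)) ∩ Z = ∅`. -/
def Blocked (G : DAG V) (Z : Set V) (p : List V) : Prop :=
  (∃ a w b, List.IsInfix [a, w, b] p ∧ ¬ (G.E a w ∧ G.E b w) ∧ w ∈ Z) ∨
  (∃ w, G.IsColliderOn p w ∧ (insert w (G.De w)) ∩ Z = ∅)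

/-- `A` and `B` are d-separated given `Z` in `G`: every path between `A` and `B`
is blocked by `Z`. -/
def dsep (G : DAG V) (A B : V) (Z : Set V) : Prop :=
  ∀ p, G.IsPathBetween A B p → G.Blocked Z p

/-- The `h`-hop neighborhood of `Y`: vertices at skeleton distance at most `h`
from `Y` (equivalently, joined to `Y` by a path with at most `h` edges). -/
def NeHood (G : DAG V) (Y : V) (h : ℕ) : Set V :=
  {d | ∃ p, G.IsPathBetween Y d p ∧ p.length ≤ h + 1}

/-- `C_s(D,G)`: vertices still adjacent to `D` at iteration `s` of a PC-style
local procedure. -/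
def Csets (G : DAG V) (D : V) : ℕ → Set V
  | 0 => {v | v ≠ D}
  | s + 1 => {A | A ∈ G.Csets D s ∧
      ¬ ∃ Z : Finset V, (Z : Set V) ⊆ G.Csets D s \ {A} ∧ Z.card = s + 1 ∧
        G.dsep D A (Z : Set V)}

/-- Spurious neighbors of `D`: `C_{|V|-2}(D,G) \ Ne(D,G)`. -/
def SNe [Fintype V] (G : DAG V) (D : V) : Set V :=
  G.Csets D (Fintype.card V - 2) \ G.Ne D

/-- `p` is a descendant inducing path (DIP) between `A` and `B`. Here `L` is
the (ordered) list of vertices of `{A,B} ∪ (Ne(A,G) ∩ V(p))` in their order of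
appearance along `p`; the colliders of `p` are exactly the interior elements of
`L`, and each element of `L` is a descendant of its predecessor. -/
def IsDIP (G : DAG V) (A B : V) (p : List V) : Prop :=
  G.IsPathBetween A B p ∧
  ∃ L : List V, L.Sublist p ∧
    (∀ v, v ∈ L ↔ v ∈ p ∧ (v = A ∨ v = B ∨ v ∈ G.Ne A)) ∧
    (∀ w, G.IsColliderOn p w ↔ (w ∈ L ∧ w ≠ A ∧ w ≠ B)) ∧
    L.Chain' (fun x y => y ∈ G.De x)

/-- Descendant inducing neighbors of `A`: vertices `B ∉ Ne(A,G) ∪ {A}` such that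
a DIP between `A` and `B` exists in `G`. -/
def DINe (G : DAG V) (A : V) : Set V :=
  {B | B ∉ G.Ne A ∧ B ≠ A ∧ ∃ p, G.IsDIP A B p}

/-- The local Markov equivalence class of `G` relative to `Y` and hop `h`. -/
def LMEC [Fintype V] (G : DAG V) (Y : V) (h : ℕ) : Set (DAG V) :=
  {Gi | ∀ D ∈ G.NeHood Y h, ∀ s : ℕ, 1 ≤ s → s ≤ Fintype.card V - 2 →
    ∀ W ∈ G.Csets D (s - 1), ∀ S : Finset V,
      (S : Set V) ⊆ G.Csets D (s - 1) \ {W} → S.card = s →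
      (G.dsep D W (S : Set V) ↔ Gi.dsep D W (S : Set V))}

/-- The triple `(D₁,D₂,D₃)` forms an unshielded collider: `D₁ → D₂ ← D₃`
with `D₁` and `D₃` non-adjacent. -/
def IsUC (G : DAG V) (D₁ D₂ D₃ : V) : Prop :=
  D₁ ≠ D₂ ∧ D₂ ≠ D₃ ∧ D₁ ≠ D₃ ∧ G.E D₁ D₂ ∧ G.E D₃ D₂ ∧ D₁ ∉ G.Ne D₃

/-- `(D,A,W)` is a non-collider triple: `A ∈ Ne(D)`, `W ∈ Ne(A)`, and not both
`D → A` and `W → A` are edges. -/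
def NonColliderTriple (G : DAG V) (D A W : V) : Prop :=
  D ≠ A ∧ A ≠ W ∧ D ≠ W ∧ A ∈ G.Ne D ∧ W ∈ G.Ne A ∧ ¬ (G.E D A ∧ G.E W A)

/-- Undirected edge of the LEG between two nodes of the `h`-hop neighborhood. -/
def LEGundirLocal [Fintype V] (G : DAG V) (Y : V) (h : ℕ) (D₁ D₂ : V) : Prop :=
  D₁ ∈ G.NeHood Y h ∧ D₂ ∈ G.NeHood Y h ∧
  (∀ Gi ∈ G.LMEC Y h, Gi.E D₁ D₂ ∨ Gi.E D₂ D₁) ∧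
  (∃ Gi ∈ G.LMEC Y h, Gi.E D₁ D₂) ∧ (∃ Gj ∈ G.LMEC Y h, Gj.E D₂ D₁)

/-- Undirected edge of the LEG between a node of the neighborhood and a node outside. -/
def LEGundirOutside [Fintype V] (G : DAG V) (Y : V) (h : ℕ) (D A : V) : Prop :=
  D ∈ G.NeHood Y h ∧ A ∉ G.NeHood Y h ∧
  ∀ Gi ∈ G.LMEC Y h, A ∈ Gi.Ne D ∪ Gi.SNe D

/-- Directed edge of the LEG. -/
def LEGdir [Fintype V] (G : DAG V) (Y : V) (h : ℕ) (D₁ D₂ : V) : Prop :=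
  D₁ ∈ G.NeHood Y h ∧ D₂ ∈ G.NeHood Y h ∧
  ∀ Gi ∈ G.LMEC Y h, Gi.E D₁ D₂

/-- Double-bar edge of the LEG. -/
def LEGdoubleBar [Fintype V] (G : DAG V) (Y : V) (h : ℕ) (D A : V) : Prop :=
  D ∈ G.NeHood Y h ∧ A ∉ G.NeHood Y h ∧
  (∀ Gi ∈ G.LMEC Y h, A ∈ Gi.Ne D ∪ Gi.SNe D) ∧
  (∀ Gi ∈ G.LMEC Y h, ∀ W : V, W ∉ Gi.NeHood Y h ∪ Gi.Ne D ∪ Gi.SNe D →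
    ¬ Gi.NonColliderTriple D A W)

/-- Undirected edge of the LEG (either of the two undirected edge types). -/
def LEGundir [Fintype V] (G : DAG V) (Y : V) (h : ℕ) (D A : V) : Prop :=
  G.LEGundirLocal Y h D A ∨ G.LEGundirLocal Y h A D ∨ G.LEGundirOutside Y h D A

/-- `Dset` satisfies the non-orientability criterion (NOC) in the LEG `L^{Y,h}`. -/
def NOC [Fintype V] (G : DAG V) (Y : V) (h : ℕ) (Dset : Set V) : Prop :=
  Dset ⊆ G.NeHood Y h ∧
  ∀ D ∈ Dset,
    (¬ ∃ A, A ∉ Dset ∧ G.LEGundir Y h D A) ∧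
    (∀ A₁ A₂, A₁ ∉ Dset → A₂ ∉ Dset →
      G.LEGdoubleBar Y h D A₁ → G.LEGdoubleBar Y h D A₂ → A₁ = A₂)

end DAG


/-- Auxiliary: walking a directed segment from `A`, either we reach `B` by a
directed path, or we hit a collider that is a descendant of `A`. -/
lemma stmt9_aux {V : Type u} (G : DAG V) (A B : V) :
    ∀ (l : List V) (x y : V), G.E x y → Relation.TransGen G.E A y →
    List.Chain' (fun a b => G.E a b ∨ G.E b a) (x :: y :: l) →
    (x :: y :: l).getLast? = some B →
    Relation.TransGen G.E A B ∨
      ∃ a w b, List.IsInfix [a, w, b] (x :: y :: l) ∧ G.E a w ∧ G.E b w ∧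
        Relation.TransGen G.E A w := by
  intro l
  induction l with
  | nil =>
      intro x y _ hAy _ hlast
      simp only [List.getLast?_cons_cons, List.getLast?_singleton,
        Option.some.injEq] at hlast
      exact Or.inl (hlast ▸ hAy)
  | cons z l' ih =>
      intro x y hxy hAy hch hlast
      have hch' : List.Chain' (fun a b => G.E a b ∨ G.E b a) (y :: z :: l') :=
        hch.tail
      have hyz : G.E y z ∨ G.E z y := (List.isChain_cons_cons.mp hch').1
      rcases hyz with hyz | hzy
      · have hlast' : (y :: z :: l').getLast? = some B := by
          simpa [List.getLast?_cons_cons] using hlast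
        rcases ih y z hyz (hAy.tail hyz) hch' hlast' with h | ⟨a, w, b, hinf, h1, h2, h3⟩
        · exact Or.inl h
        · exact Or.inr ⟨a, w, b, hinf.trans (List.suffix_cons x _).isInfix, h1, h2, h3⟩
      · refine Or.inr ⟨x, y, z, ?_, hxy, hzy, hAy⟩
        exact ⟨[], l', rfl⟩

/-- a vertex is d-separated from any non-descendant non-parent
given its parents. -/
theorem stmt_9 {V : Type u} [Fintype V] (G : DAG V) (A B : V) (hAB : A ≠ B)
    (hDe : B ∉ G.De A) (hPa : B ∉ G.Pa A) :
    G.dsep A B (G.Pa A) := by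
  intro p hp
  obtain ⟨hnd, hch, hhead, hlast⟩ := hp
  match p, hhead, hlast, hch, hnd with
  | [_], hhead, hlast, _, _ =>
      simp only [List.head?_cons, Option.some.injEq] at hhead
      simp only [List.getLast?_singleton, Option.some.injEq] at hlast
      exact absurd (hhead ▸ hlast) hAB
  | (a :: v :: rest), hhead, hlast, hch, hnd =>
      simp only [List.head?_cons, Option.some.injEq] at hhead
      subst hhead
      have hAv : G.E a v ∨ G.E v a := (List.isChain_cons_cons.mp hch).1
      rcases hAv with hAv | hvA
      · -- A → v : walk forward
        rcases stmt9_aux G a B rest a v hAv (Relation.TransGen.single hAv)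
            hch hlast with h | ⟨a1, w, b1, hinf, h1, h2, h3⟩
        · exact absurd h hDe
        · refine Or.inr ⟨w, ⟨a1, b1, hinf, h1, h2⟩, ?_⟩
          ext u
          simp only [Set.mem_inter_iff, Set.mem_insert_iff, Set.mem_empty_iff_false,
            iff_false, not_and]
          rintro (rfl | hu) huPa
          · exact G.acyclic a (h3.tail huPa)
          · exact G.acyclic a ((h3.trans hu).tail huPa)
      · -- v → A : v is a parent of A and a non-collider
        match rest, hlast with
        | [], hlast =>
            simp only [List.getLast?_cons_cons, List.getLast?_singleton,
              Option.some.injEq] at hlast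
            exact absurd (hlast ▸ hvA) hPa
        | (c :: rest'), _ =>
            refine Or.inl ⟨a, v, c, ⟨[], rest', rfl⟩, ?_, hvA⟩
            rintro ⟨hAv, -⟩
            exact G.acyclic a ((Relation.TransGen.single hAv).tail hvA)
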